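/- Let S be a join-semilattice with zero and δ : X × X → S an S-valued distance satisfying the V-condition. Then the map φ : S → Eq(X) defined by φ(a) = {(x,y) | δ(x,y) ≤ a} is a join-homomorphism, i.e., φ(a ∨ b) = φ(a) ∨ φ(b) where the join on the right is taken in the lattice of equivalence relations on X. -/
import Mathlib


/-- An `S`-valued distance on `X`. -/
def IsSDistance {X : Type*} {S : Type*} [SemilatticeSup S] [OrderBot S]
    (δ : X → X → S) : Prop :=
  (∀ x, δ x x = ⊥) ∧ (∀ x y, δ x y = δ y x) ∧
    (∀ x y z, δ x z ≤ δ x y ⊔ δ y z)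

/-- The V-condition: whenever `δ x y ≤ a ⊔ b` there is an alternating chain
`z 0 = x, …, z (n+1) = y` with even steps below `a` and odd steps below `b`. -/
def VCondition {X : Type*} {S : Type*} [SemilatticeSup S] [OrderBot S]
    (δ : X → X → S) : Prop :=
  ∀ x y : X, ∀ a b : S, δ x y ≤ a ⊔ b →
    ∃ n : ℕ, 0 < n ∧ ∃ z : ℕ → X, z 0 = x ∧ z (n + 1) = y ∧
      ∀ i ≤ n, (Even i → δ (z i) (z (i + 1)) ≤ a) ∧
        (Odd i → δ (z i) (z (i + 1)) ≤ b)

/-- If `δ` is an `S`-valued distance satisfying the V-condition, then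
`φ(a) = {(x,y) | δ(x,y) ≤ a}` is a join-homomorphism to equivalence relations:
`φ(a ⊔ b)` is the join (equivalence closure of the union) of `φ(a)` and `φ(b)`. -/
theorem phi_join_hom {X : Type*} {S : Type*} [SemilatticeSup S] [OrderBot S]
    (δ : X → X → S) (hδ : IsSDistance δ) (hV : VCondition δ) (a b : S) :
    ∀ x y : X, δ x y ≤ a ⊔ b ↔
      Relation.EqvGen (fun u v : X => δ u v ≤ a ∨ δ u v ≤ b) x y := by
  obtain ⟨hrefl, hsymm, htri⟩ := hδ
  intro x y
  constructor
  · intro h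
    obtain ⟨n, hn, z, hz0, hzn, hstep⟩ := hV x y a b h
    have key : ∀ k, k ≤ n + 1 → Relation.EqvGen
        (fun u v : X => δ u v ≤ a ∨ δ u v ≤ b) (z 0) (z k) := by
      intro k
      induction k with
      | zero => intro _; exact Relation.EqvGen.refl _
      | succ m ih =>
        intro hm
        have hmn : m ≤ n := Nat.lt_succ_iff.mp hm
        refine Relation.EqvGen.trans _ _ _ (ih (Nat.le_succ_of_le hmn)) ?_
        apply Relation.EqvGen.rel
        rcases Nat.even_or_odd m with he | ho
        · exact Or.inl ((hstep m hmn).1 he)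
        · exact Or.inr ((hstep m hmn).2 ho)
    have := key (n + 1) le_rfl
    rwa [hz0, hzn] at this
  · intro h
    induction h with
    | rel u v huv =>
      rcases huv with h' | h'
      · exact h'.trans le_sup_left
      · exact h'.trans le_sup_right
    | refl u => rw [hrefl]; exact bot_le
    | symm u v _ ih => rw [hsymm]; exact ih
    | trans u v w _ _ ih1 ih2 =>
      exact (htri u v w).trans (sup_le ih1 ih2)
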